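/- Fix A, b, c and regard M-CLP as a problem parametrized by ρ = (β, γ, T, λ, μ) with T > 0. If M-CLP(ρ⁰) is feasible with horizon T⁰ > 0 and M-CLP(ρ¹) is feasible with horizon T¹ > 0, then for every θ ∈ [0,1] the problem M-CLP((1−θ)ρ⁰ + θρ¹) is feasible; the same statement holds for M-CLP*. Consequently, the set of parameters ρ = (β, γ, T, λ, μ) with T > 0 for which both M-CLP(ρ) and M-CLP*(ρ) are feasible is a convex set. -/

import Mathlib

open MeasureTheory Filter

/-- A feasible solution of M-CLP. -/
def PrimalFeasible {K J : ℕ} (A : Matrix (Fin K) (Fin J) ℝ) (b β lam : Fin K → ℝ) (T : ℝ)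
    (U : ℝ → Fin J → ℝ) : Prop :=
  (∀ j, MonotoneOn (fun t => U t j) (Set.Icc 0 T)) ∧
  (∀ j, ∀ t ∈ Set.Ico (0:ℝ) T,
    Tendsto (fun s => U s j) (nhdsWithin t (Set.Ioi t)) (nhds (U t j))) ∧
  (∀ j, 0 ≤ U 0 j) ∧
  (∀ t ∈ Set.Ico (0:ℝ) T, ∀ k, A.mulVec (U t) k ≤ β k + t * b k) ∧
  (∀ k, A.mulVec (U T) k ≤ β k + T * b k + lam k)

/-- A feasible solution of M-CLP*. -/
def DualFeasible {K J : ℕ} (A : Matrix (Fin K) (Fin J) ℝ) (c γ μ : Fin J → ℝ) (T : ℝ)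
    (P : ℝ → Fin K → ℝ) : Prop :=
  (∀ k, MonotoneOn (fun s => P s k) (Set.Icc 0 T)) ∧
  (∀ k, ∀ s ∈ Set.Ico (0:ℝ) T,
    Tendsto (fun r => P r k) (nhdsWithin s (Set.Ioi s)) (nhds (P s k))) ∧
  (∀ k, 0 ≤ P 0 k) ∧
  (∀ s ∈ Set.Ico (0:ℝ) T, ∀ j, γ j + s * c j ≤ A.transpose.mulVec (P s) j) ∧
  (∀ j, γ j + T * c j + μ j ≤ A.transpose.mulVec (P T) j)

/-- Feasibility of M-CLP as a property of its parameters. -/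
def PrimalFeasibleParams {K J : ℕ} (A : Matrix (Fin K) (Fin J) ℝ) (b : Fin K → ℝ)
    (β lam : Fin K → ℝ) (T : ℝ) : Prop :=
  ∃ U, PrimalFeasible A b β lam T U

/-- Feasibility of M-CLP* as a property of its parameters. -/
def DualFeasibleParams {K J : ℕ} (A : Matrix (Fin K) (Fin J) ℝ) (c : Fin J → ℝ)
    (γ μ : Fin J → ℝ) (T : ℝ) : Prop :=
  ∃ P, DualFeasible A c γ μ T P

/-- Feasibility of M-CLP (resp. M-CLP*) is preserved along convex combinations of the
parameters `ρ = (β, γ, T, λ, μ)`; consequently the set of parameters with `T > 0` for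
which both problems are feasible is convex. -/
lemma convexT {T0 T1 θ : ℝ} (hT0 : 0 < T0) (hT1 : 0 < T1) (h0 : 0 ≤ θ) (h1 : θ ≤ 1) :
    0 < (1 - θ) * T0 + θ * T1 := by
  rcases eq_or_lt_of_le h0 with h | h
  · rw [← h]; simpa using hT0
  · nlinarith [mul_pos h hT1, mul_nonneg (sub_nonneg.2 h1) hT0.le]

lemma scale_tendsto {f : ℝ → ℝ} {t c L : ℝ} (hc : 0 < c)
    (hf : Tendsto f (nhdsWithin (t * c) (Set.Ioi (t * c))) (nhds L)) :
    Tendsto (fun s => f (s * c)) (nhdsWithin t (Set.Ioi t)) (nhds L) := by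
  apply hf.comp
  apply tendsto_nhdsWithin_of_tendsto_nhds_of_eventually_within
  · exact ((continuous_id.mul continuous_const).tendsto t).mono_left nhdsWithin_le_nhds
  · filter_upwards [self_mem_nhdsWithin] with s hs
    exact mul_lt_mul_of_pos_right hs hc

lemma primal_comb {K J : ℕ} (A : Matrix (Fin K) (Fin J) ℝ) (b : Fin K → ℝ)
    (β0 β1 lam0 lam1 : Fin K → ℝ) (T0 T1 : ℝ) (hT0 : 0 < T0) (hT1 : 0 < T1)
    (h0 : PrimalFeasibleParams A b β0 lam0 T0) (h1 : PrimalFeasibleParams A b β1 lam1 T1)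
    (θ : ℝ) (hθ : θ ∈ Set.Icc (0:ℝ) 1) :
    PrimalFeasibleParams A b ((1 - θ) • β0 + θ • β1) ((1 - θ) • lam0 + θ • lam1)
      ((1 - θ) * T0 + θ * T1) := by
  obtain ⟨hθ0, hθ1⟩ := hθ
  have hθ0' : (0:ℝ) ≤ 1 - θ := by linarith
  obtain ⟨U0, m0, rc0, nn0, con0, fin0⟩ := h0
  obtain ⟨U1, m1, rc1, nn1, con1, fin1⟩ := h1
  set T := (1 - θ) * T0 + θ * T1 with hTdef
  have hT : 0 < T := convexT hT0 hT1 hθ0 hθ1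
  set c0 := T0 / T with hc0
  set c1 := T1 / T with hc1
  have hc0p : 0 < c0 := div_pos hT0 hT
  have hc1p : 0 < c1 := div_pos hT1 hT
  have e0 : T * c0 = T0 := by rw [hc0]; field_simp
  have e1 : T * c1 = T1 := by rw [hc1]; field_simp
  have key : ∀ t : ℝ, (1 - θ) * (t * c0) + θ * (t * c1) = t := by
    intro t
    rw [hc0, hc1]
    field_simp
    linear_combination (-t) * hTdef
  have mem0 : ∀ t ∈ Set.Icc (0:ℝ) T, t * c0 ∈ Set.Icc (0:ℝ) T0 := fun t ht =>
    ⟨mul_nonneg ht.1 hc0p.le, by calc t * c0 ≤ T * c0 := by nlinarith [ht.2]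
                                   _ = T0 := e0⟩
  have mem1 : ∀ t ∈ Set.Icc (0:ℝ) T, t * c1 ∈ Set.Icc (0:ℝ) T1 := fun t ht =>
    ⟨mul_nonneg ht.1 hc1p.le, by calc t * c1 ≤ T * c1 := by nlinarith [ht.2]
                                   _ = T1 := e1⟩
  have smem0 : ∀ t ∈ Set.Ico (0:ℝ) T, t * c0 ∈ Set.Ico (0:ℝ) T0 := fun t ht =>
    ⟨mul_nonneg ht.1 hc0p.le, by calc t * c0 < T * c0 := by nlinarith [ht.2]
                                   _ = T0 := e0⟩
  have smem1 : ∀ t ∈ Set.Ico (0:ℝ) T, t * c1 ∈ Set.Ico (0:ℝ) T1 := fun t ht =>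
    ⟨mul_nonneg ht.1 hc1p.le, by calc t * c1 < T * c1 := by nlinarith [ht.2]
                                   _ = T1 := e1⟩
  refine ⟨fun t => (1 - θ) • U0 (t * c0) + θ • U1 (t * c1), ?_, ?_, ?_, ?_, ?_⟩
  · intro j t1 h1' t2 h2' h12
    simp only [Pi.add_apply, Pi.smul_apply, smul_eq_mul]
    exact add_le_add
      (mul_le_mul_of_nonneg_left
        (m0 j (mem0 _ h1') (mem0 _ h2') (mul_le_mul_of_nonneg_right h12 hc0p.le)) hθ0')
      (mul_le_mul_of_nonneg_left
        (m1 j (mem1 _ h1') (mem1 _ h2') (mul_le_mul_of_nonneg_right h12 hc1p.le)) hθ0)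
  · intro j t ht
    simp only [Pi.add_apply, Pi.smul_apply, smul_eq_mul]
    exact ((scale_tendsto hc0p (rc0 j _ (smem0 t ht))).const_mul _).add
      ((scale_tendsto hc1p (rc1 j _ (smem1 t ht))).const_mul _)
  · intro j
    simp only [Pi.add_apply, Pi.smul_apply, smul_eq_mul, zero_mul]
    exact add_nonneg (mul_nonneg hθ0' (nn0 j)) (mul_nonneg hθ0 (nn1 j))
  · intro t ht k
    have h0' := con0 (t * c0) (smem0 t ht) k
    have h1' := con1 (t * c1) (smem1 t ht) k
    have hkey := key t
    simp only [Matrix.mulVec_add, Matrix.mulVec_smul, Pi.add_apply, Pi.smul_apply,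
      smul_eq_mul]
    calc (1 - θ) * A.mulVec (U0 (t * c0)) k + θ * A.mulVec (U1 (t * c1)) k
        ≤ (1 - θ) * (β0 k + t * c0 * b k) + θ * (β1 k + t * c1 * b k) :=
          add_le_add (mul_le_mul_of_nonneg_left h0' hθ0') (mul_le_mul_of_nonneg_left h1' hθ0)
      _ = (1 - θ) * β0 k + θ * β1 k + t * b k := by linear_combination (b k) * hkey
  · intro k
    have h0' := fin0 k
    have h1' := fin1 k
    simp only [Matrix.mulVec_add, Matrix.mulVec_smul, Pi.add_apply, Pi.smul_apply,
      smul_eq_mul, e0, e1]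
    calc (1 - θ) * A.mulVec (U0 T0) k + θ * A.mulVec (U1 T1) k
        ≤ (1 - θ) * (β0 k + T0 * b k + lam0 k) + θ * (β1 k + T1 * b k + lam1 k) :=
          add_le_add (mul_le_mul_of_nonneg_left h0' hθ0') (mul_le_mul_of_nonneg_left h1' hθ0)
      _ = (1 - θ) * β0 k + θ * β1 k + T * b k + ((1 - θ) * lam0 k + θ * lam1 k) := by
          linear_combination (-(b k)) * hTdef

lemma dual_comb {K J : ℕ} (A : Matrix (Fin K) (Fin J) ℝ) (c : Fin J → ℝ)
    (γ0 γ1 μ0 μ1 : Fin J → ℝ) (T0 T1 : ℝ) (hT0 : 0 < T0) (hT1 : 0 < T1)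
    (h0 : DualFeasibleParams A c γ0 μ0 T0) (h1 : DualFeasibleParams A c γ1 μ1 T1)
    (θ : ℝ) (hθ : θ ∈ Set.Icc (0:ℝ) 1) :
    DualFeasibleParams A c ((1 - θ) • γ0 + θ • γ1) ((1 - θ) • μ0 + θ • μ1)
      ((1 - θ) * T0 + θ * T1) := by
  obtain ⟨hθ0, hθ1⟩ := hθ
  have hθ0' : (0:ℝ) ≤ 1 - θ := by linarith
  obtain ⟨P0, m0, rc0, nn0, con0, fin0⟩ := h0
  obtain ⟨P1, m1, rc1, nn1, con1, fin1⟩ := h1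
  set T := (1 - θ) * T0 + θ * T1 with hTdef
  have hT : 0 < T := convexT hT0 hT1 hθ0 hθ1
  set c0 := T0 / T with hc0
  set c1 := T1 / T with hc1
  have hc0p : 0 < c0 := div_pos hT0 hT
  have hc1p : 0 < c1 := div_pos hT1 hT
  have e0 : T * c0 = T0 := by rw [hc0]; field_simp
  have e1 : T * c1 = T1 := by rw [hc1]; field_simp
  have key : ∀ t : ℝ, (1 - θ) * (t * c0) + θ * (t * c1) = t := by
    intro t
    rw [hc0, hc1]
    field_simp
    linear_combination (-t) * hTdef
  have mem0 : ∀ t ∈ Set.Icc (0:ℝ) T, t * c0 ∈ Set.Icc (0:ℝ) T0 := fun t ht =>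
    ⟨mul_nonneg ht.1 hc0p.le, by calc t * c0 ≤ T * c0 := by nlinarith [ht.2]
                                   _ = T0 := e0⟩
  have mem1 : ∀ t ∈ Set.Icc (0:ℝ) T, t * c1 ∈ Set.Icc (0:ℝ) T1 := fun t ht =>
    ⟨mul_nonneg ht.1 hc1p.le, by calc t * c1 ≤ T * c1 := by nlinarith [ht.2]
                                   _ = T1 := e1⟩
  have smem0 : ∀ t ∈ Set.Ico (0:ℝ) T, t * c0 ∈ Set.Ico (0:ℝ) T0 := fun t ht =>
    ⟨mul_nonneg ht.1 hc0p.le, by calc t * c0 < T * c0 := by nlinarith [ht.2]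
                                   _ = T0 := e0⟩
  have smem1 : ∀ t ∈ Set.Ico (0:ℝ) T, t * c1 ∈ Set.Ico (0:ℝ) T1 := fun t ht =>
    ⟨mul_nonneg ht.1 hc1p.le, by calc t * c1 < T * c1 := by nlinarith [ht.2]
                                   _ = T1 := e1⟩
  refine ⟨fun t => (1 - θ) • P0 (t * c0) + θ • P1 (t * c1), ?_, ?_, ?_, ?_, ?_⟩
  · intro k t1 h1' t2 h2' h12
    simp only [Pi.add_apply, Pi.smul_apply, smul_eq_mul]
    exact add_le_add
      (mul_le_mul_of_nonneg_left
        (m0 k (mem0 _ h1') (mem0 _ h2') (mul_le_mul_of_nonneg_right h12 hc0p.le)) hθ0')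
      (mul_le_mul_of_nonneg_left
        (m1 k (mem1 _ h1') (mem1 _ h2') (mul_le_mul_of_nonneg_right h12 hc1p.le)) hθ0)
  · intro k t ht
    simp only [Pi.add_apply, Pi.smul_apply, smul_eq_mul]
    exact ((scale_tendsto hc0p (rc0 k _ (smem0 t ht))).const_mul _).add
      ((scale_tendsto hc1p (rc1 k _ (smem1 t ht))).const_mul _)
  · intro k
    simp only [Pi.add_apply, Pi.smul_apply, smul_eq_mul, zero_mul]
    exact add_nonneg (mul_nonneg hθ0' (nn0 k)) (mul_nonneg hθ0 (nn1 k))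
  · intro t ht j
    have h0' := con0 (t * c0) (smem0 t ht) j
    have h1' := con1 (t * c1) (smem1 t ht) j
    have hkey := key t
    simp only [Matrix.mulVec_add, Matrix.mulVec_smul, Pi.add_apply, Pi.smul_apply,
      smul_eq_mul]
    calc ((1 - θ) * γ0 j + θ * γ1 j) + t * c j
        = (1 - θ) * (γ0 j + t * c0 * c j) + θ * (γ1 j + t * c1 * c j) := by
          linear_combination (-(c j)) * hkey
      _ ≤ (1 - θ) * A.transpose.mulVec (P0 (t * c0)) j
            + θ * A.transpose.mulVec (P1 (t * c1)) j :=
          add_le_add (mul_le_mul_of_nonneg_left h0' hθ0') (mul_le_mul_of_nonneg_left h1' hθ0)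
  · intro j
    have h0' := fin0 j
    have h1' := fin1 j
    simp only [Matrix.mulVec_add, Matrix.mulVec_smul, Pi.add_apply, Pi.smul_apply,
      smul_eq_mul, e0, e1]
    calc ((1 - θ) * γ0 j + θ * γ1 j) + T * c j + ((1 - θ) * μ0 j + θ * μ1 j)
        = (1 - θ) * (γ0 j + T0 * c j + μ0 j) + θ * (γ1 j + T1 * c j + μ1 j) := by
          linear_combination (c j) * hTdef
      _ ≤ (1 - θ) * A.transpose.mulVec (P0 T0) j + θ * A.transpose.mulVec (P1 T1) j :=
          add_le_add (mul_le_mul_of_nonneg_left h0' hθ0') (mul_le_mul_of_nonneg_left h1' hθ0)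

theorem feasible_params_convex {K J : ℕ}
    (A : Matrix (Fin K) (Fin J) ℝ) (b : Fin K → ℝ) (c : Fin J → ℝ) :
    (∀ (β0 β1 lam0 lam1 : Fin K → ℝ) (T0 T1 : ℝ), 0 < T0 → 0 < T1 →
      PrimalFeasibleParams A b β0 lam0 T0 → PrimalFeasibleParams A b β1 lam1 T1 →
      ∀ θ ∈ Set.Icc (0:ℝ) 1,
        PrimalFeasibleParams A b ((1 - θ) • β0 + θ • β1) ((1 - θ) • lam0 + θ • lam1)
          ((1 - θ) * T0 + θ * T1)) ∧
    (∀ (γ0 γ1 μ0 μ1 : Fin J → ℝ) (T0 T1 : ℝ), 0 < T0 → 0 < T1 →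
      DualFeasibleParams A c γ0 μ0 T0 → DualFeasibleParams A c γ1 μ1 T1 →
      ∀ θ ∈ Set.Icc (0:ℝ) 1,
        DualFeasibleParams A c ((1 - θ) • γ0 + θ • γ1) ((1 - θ) • μ0 + θ • μ1)
          ((1 - θ) * T0 + θ * T1)) ∧
    Convex ℝ {ρ : (Fin K → ℝ) × (Fin J → ℝ) × ℝ × (Fin K → ℝ) × (Fin J → ℝ) |
      0 < ρ.2.2.1 ∧ PrimalFeasibleParams A b ρ.1 ρ.2.2.2.1 ρ.2.2.1 ∧
      DualFeasibleParams A c ρ.2.1 ρ.2.2.2.2 ρ.2.2.1} := by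
  refine ⟨fun β0 β1 lam0 lam1 T0 T1 hT0 hT1 h0 h1 θ hθ =>
    primal_comb A b β0 β1 lam0 lam1 T0 T1 hT0 hT1 h0 h1 θ hθ,
    fun γ0 γ1 μ0 μ1 T0 T1 hT0 hT1 h0 h1 θ hθ =>
    dual_comb A c γ0 γ1 μ0 μ1 T0 T1 hT0 hT1 h0 h1 θ hθ, ?_⟩
  intro x hx y hy a b' ha hb hab
  have haeq : a = 1 - b' := by linarith
  subst haeq
  obtain ⟨hxT, hxP, hxD⟩ := hx
  obtain ⟨hyT, hyP, hyD⟩ := hy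
  have hb1 : b' ≤ 1 := by linarith
  refine ⟨?_, ?_, ?_⟩
  · show 0 < ((1 - b') • x + b' • y).2.2.1
    simpa using convexT hxT hyT hb hb1
  · have := primal_comb A b x.1 y.1 x.2.2.2.1 y.2.2.2.1 x.2.2.1 y.2.2.1 hxT hyT hxP hyP b'
      ⟨hb, hb1⟩
    simpa [Prod.smul_fst, Prod.smul_snd, smul_eq_mul] using this
  · have := dual_comb A c x.2.1 y.2.1 x.2.2.2.2 y.2.2.2.2 x.2.2.1 y.2.2.1 hxT hyT hxD hyD b'
      ⟨hb, hb1⟩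
    simpa [Prod.smul_fst, Prod.smul_snd, smul_eq_mul] using this
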